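/- The EEC transform respects the original power bounds: if 0 ≤ P_ch ≤ P̄_ch and 0 ≤ P_dch ≤ P̄_dch, then the transformed pair satisfies 0 ≤ P̃_ch ≤ P̄_ch and 0 ≤ P̃_dch ≤ P̄_dch. In particular, if ΔE ≥ 0 then P̃_ch = P_ch − P_dch/(η_ch·η_dch) ≤ P_ch, and if ΔE < 0 then P̃_dch = P_dch − P_ch·η_ch·η_dch ≤ P_dch. -/

import Mathlib

/-- The EEC transform respects the original power bounds. -/
theorem eec_respects_bounds
    (Pch Pdch PchMax PdchMax ηch ηdch ΔT : ℝ)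
    (hPch : 0 ≤ Pch) (hPchUB : Pch ≤ PchMax)
    (hPdch : 0 ≤ Pdch) (hPdchUB : Pdch ≤ PdchMax)
    (hPchMax : 0 ≤ PchMax) (hPdchMax : 0 ≤ PdchMax)
    (hηch : ηch ∈ Set.Ioc (0:ℝ) 1) (hηdch : ηdch ∈ Set.Ioc (0:ℝ) 1)
    (hΔT : 0 < ΔT) :
    let ΔE := ΔT * (Pch * ηch - Pdch / ηdch)
    let Pch' := if 0 ≤ ΔE then ΔE / (ηch * ΔT) else 0
    let Pdch' := if 0 ≤ ΔE then 0 else -ΔE * ηdch / ΔT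
    (0 ≤ Pch' ∧ Pch' ≤ PchMax) ∧ (0 ≤ Pdch' ∧ Pdch' ≤ PdchMax) ∧
    (0 ≤ ΔE → Pch' = Pch - Pdch / (ηch * ηdch) ∧ Pch' ≤ Pch) ∧
    (ΔE < 0 → Pdch' = Pdch - Pch * ηch * ηdch ∧ Pdch' ≤ Pdch) := by
  obtain ⟨hc0, hc1⟩ := hηch
  obtain ⟨hd0, hd1⟩ := hηdch
  intro ΔE Pch' Pdch'
  have hEch : Pch' = if 0 ≤ ΔE then Pch - Pdch / (ηch * ηdch) else 0 := by
    simp only [Pch', ΔE]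
    congr 1
    field_simp
  have hEdch : Pdch' = if 0 ≤ ΔE then 0 else Pdch - Pch * ηch * ηdch := by
    simp only [Pdch', ΔE]
    congr 1
    field_simp
    ring
  refine ⟨⟨?_, ?_⟩, ?_⟩
  · simp only [Pch']
    split
    · positivity
    · exact le_rfl
  · rw [hEch]
    split
    · have : 0 ≤ Pdch / (ηch * ηdch) := by positivity
      linarith
    · exact hPchMax
  refine ⟨⟨?_, ?_⟩, ?_, ?_⟩
  · simp only [Pdch']
    split
    · exact le_rfl
    · rename_i h
      push_neg at h
      have : 0 ≤ -ΔE := by linarith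
      positivity
  · rw [hEdch]
    split
    · exact hPdchMax
    · have : 0 ≤ Pch * ηch * ηdch := by positivity
      linarith
  · intro h
    rw [hEch, if_pos h]
    refine ⟨rfl, ?_⟩
    have : 0 ≤ Pdch / (ηch * ηdch) := by positivity
    linarith
  · intro h
    rw [hEdch, if_neg (not_le.mpr h)]
    refine ⟨rfl, ?_⟩
    have : 0 ≤ Pch * ηch * ηdch := by positivity
    linarith
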